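/- arXiv:1608.04881 — 2 statements merged into one kernel-verified Lean document; each statement's English description precedes it below -/
import Mathlib

section
/- Every modular bridge γ from Ω_A to Ω_B has finite length: λ(γ) < ∞. More precisely, for all ω ∈ M with D_M(ω) ≤ 1 and η ∈ N with D_N(η) ≤ 1 one has dn_γ(ω,η) ≤ 2, so that the modular reach satisfies ρ_mod(γ) ≤ 2. -/
open scoped ComplexOrder

noncomputable section

/-! ### Admissible functions -/

/-- A function `F : [0,∞)⁴ → [0,∞)` is admissible when it is nondecreasing in each argument
and dominates `x₁x₃ + x₂x₄`. -/
def Admissible (F : ℝ → ℝ → ℝ → ℝ → ℝ) : Prop :=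
  (∀ x₁ x₂ x₃ x₄ y₁ y₂ y₃ y₄ : ℝ, 0 ≤ x₁ → 0 ≤ x₂ → 0 ≤ x₃ → 0 ≤ x₄ →
      x₁ ≤ y₁ → x₂ ≤ y₂ → x₃ ≤ y₃ → x₄ ≤ y₄ → F x₁ x₂ x₃ x₄ ≤ F y₁ y₂ y₃ y₄) ∧
  (∀ x₁ x₂ x₃ x₄ : ℝ, 0 ≤ x₁ → 0 ≤ x₂ → 0 ≤ x₃ → 0 ≤ x₄ →
      x₁ * x₃ + x₂ * x₄ ≤ F x₁ x₂ x₃ x₄)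

/-- An admissible triple `(F,G,H)`. -/
def AdmissibleTriple (F : ℝ → ℝ → ℝ → ℝ → ℝ) (G : ℝ → ℝ → ℝ → ℝ) (H : ℝ → ℝ → ℝ) : Prop :=
  Admissible F ∧
  (∀ x y z x' y' z' : ℝ, 0 ≤ x → 0 ≤ y → 0 ≤ z → x ≤ x' → y ≤ y' → z ≤ z' →
      G x y z ≤ G x' y' z') ∧
  (∀ x y z : ℝ, 0 ≤ x → 0 ≤ y → 0 ≤ z → (x + y) * z ≤ G x y z) ∧
  (∀ x y x' y' : ℝ, 0 ≤ x → 0 ≤ y → x ≤ x' → y ≤ y' → H x y ≤ H x' y') ∧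
  (∀ x y : ℝ, 0 ≤ x → 0 ≤ y → 2 * x * y ≤ H x y)

section ReIm

variable {A : Type*} [NormedRing A] [StarRing A] [NormedAlgebra ℂ A]

/-- The real part `(a + a*)/2` of an element of a complex `*`-algebra. -/
def reEl (a : A) : A := (2⁻¹ : ℂ) • (a + star a)

/-- The imaginary part `(a - a*)/(2i)` of an element of a complex `*`-algebra. -/
def imEl (a : A) : A := ((2 * Complex.I)⁻¹ : ℂ) • (a - star a)

end ReIm

/-! ### States -/

/-- A state on a unital complex `*`-algebra: a linear functional which is unital
and positive. -/
structure CState (A : Type*) [NormedRing A] [StarRing A] [NormedAlgebra ℂ A] where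
  toFun : A →ₗ[ℂ] ℂ
  map_one : toFun 1 = 1
  positive : ∀ a : A, 0 ≤ toFun (star a * a)

/-- The topology induced by a distance function, generated by its open balls. -/
def ballTopology {X : Type*} (d : X → X → ℝ) : TopologicalSpace X :=
  TopologicalSpace.generateFrom {s | ∃ (x : X) (ε : ℝ), 0 < ε ∧ s = {y | d x y < ε}}

/-- The Hausdorff distance between two sets, relative to a distance function. -/
def hausDist {X : Type*} (d : X → X → ℝ) (S T : Set X) : ℝ :=
  max (sSup {r | ∃ x ∈ S, r = sInf {s | ∃ y ∈ T, s = d x y}})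
      (sSup {r | ∃ y ∈ T, r = sInf {s | ∃ x ∈ S, s = d x y}})

/-- The diameter of a set relative to a distance function. -/
def setDiam {X : Type*} (d : X → X → ℝ) (S : Set X) : ℝ :=
  sSup {r | ∃ x ∈ S, ∃ y ∈ S, r = d x y}

/-- The weak-* topology on the state space. -/
def stateWeakTopology (A : Type*) [NormedRing A] [StarRing A] [NormedAlgebra ℂ A] :
    TopologicalSpace (CState A) :=
  TopologicalSpace.induced (fun (φ : CState A) (a : A) => φ.toFun a) Pi.topologicalSpace

/-- The Monge-Kantorovich metric associated with a Lipschitz seminorm `L` with domain `dom`. -/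
def mkDist {A : Type*} [NormedRing A] [StarRing A] [NormedAlgebra ℂ A]
    (dom : Set A) (L : A → ℝ) (φ ψ : CState A) : ℝ :=
  sSup {r | ∃ a ∈ dom, L a ≤ 1 ∧ r = ‖φ.toFun a - ψ.toFun a‖}

/-- The 1-level set of a pivot is nonempty. -/
def pivotLevelNonempty {D : Type*} [NormedRing D] [StarRing D] [NormedAlgebra ℂ D]
    (x : D) : Prop :=
  ∃ φ : CState D,
    φ.toFun (star (1 - x) * (1 - x)) = 0 ∧ φ.toFun ((1 - x) * star (1 - x)) = 0

/-! ### Quasi-Leibniz quantum compact metric spaces -/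

/-- An `F`-quasi-Leibniz quantum compact metric space structure on a unital C*-algebra `A`:
a Lipschitz seminorm `L` defined on a dense Jordan-Lie subalgebra `dom` of the self-adjoint
part of `A`, vanishing exactly on `ℝ1`, lower semicontinuous, whose Monge-Kantorovich metric
metrizes the weak-* topology on the state space, and satisfying the `F`-quasi-Leibniz
inequality. -/
structure QLSpace (A : Type*) [NormedRing A] [StarRing A] [CStarRing A]
    [NormedAlgebra ℂ A] [StarModule ℂ A] [CompleteSpace A]
    (F : ℝ → ℝ → ℝ → ℝ → ℝ) where
  dom : Set A
  L : A → ℝ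
  dom_selfAdjoint : ∀ a ∈ dom, IsSelfAdjoint a
  dom_dense : closure dom = {a : A | IsSelfAdjoint a}
  dom_add : ∀ a ∈ dom, ∀ b ∈ dom, a + b ∈ dom
  dom_smul : ∀ (t : ℝ), ∀ a ∈ dom, (t : ℂ) • a ∈ dom
  dom_jordan : ∀ a ∈ dom, ∀ b ∈ dom, (2⁻¹ : ℂ) • (a * b + b * a) ∈ dom
  dom_lie : ∀ a ∈ dom, ∀ b ∈ dom, ((2 * Complex.I)⁻¹ : ℂ) • (a * b - b * a) ∈ dom
  one_mem : (1 : A) ∈ dom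
  L_nonneg : ∀ a : A, 0 ≤ L a
  L_add : ∀ a ∈ dom, ∀ b ∈ dom, L (a + b) ≤ L a + L b
  L_smul : ∀ (t : ℝ), ∀ a ∈ dom, L ((t : ℂ) • a) = |t| * L a
  L_eq_zero_iff : ∀ a ∈ dom, (L a = 0 ↔ ∃ t : ℝ, a = (t : ℂ) • (1 : A))
  lowerSemicontinuous : IsClosed {a : A | a ∈ dom ∧ L a ≤ 1}
  leibniz_jordan : ∀ a ∈ dom, ∀ b ∈ dom,
      L ((2⁻¹ : ℂ) • (a * b + b * a)) ≤ F ‖a‖ ‖b‖ (L a) (L b)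
  leibniz_lie : ∀ a ∈ dom, ∀ b ∈ dom,
      L (((2 * Complex.I)⁻¹ : ℂ) • (a * b - b * a)) ≤ F ‖a‖ ‖b‖ (L a) (L b)
  mk_metrizes : ballTopology (mkDist dom L) = stateWeakTopology A
/-! ### Metrized quantum vector bundles -/

/-- An `(F,G,H)`-metrized quantum vector bundle: a left Hilbert module `M` over a unital
C*-algebra `A` equipped with an `F`-quasi-Leibniz quantum compact metric space structure,
together with a D-norm `D` defined on a dense subspace `Ddom` of `M`, dominating the
C*-Hilbert norm, with compact unit ball, and satisfying the inner and modular quasi-Leibniz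
inequalities with respect to `G` and `H`. -/
structure BundledMQVB (F : ℝ → ℝ → ℝ → ℝ → ℝ) (G : ℝ → ℝ → ℝ → ℝ) (H : ℝ → ℝ → ℝ) where
  A : Type
  [instRing : NormedRing A]
  [instStarRing : StarRing A]
  [instCStar : CStarRing A]
  [instAlg : NormedAlgebra ℂ A]
  [instStarMod : StarModule ℂ A]
  [instComplete : CompleteSpace A]
  M : Type
  [instM : NormedAddCommGroup M]
  [instMC : Module ℂ M]
  [instMA : Module A M]
  [instTower : IsScalarTower ℂ A M]
  [instMComplete : CompleteSpace M]
  base : QLSpace A F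
  inn : M → M → A
  Ddom : Set M
  D : M → ℝ
  inn_add_left : ∀ x y z : M, inn (x + y) z = inn x z + inn y z
  inn_smul_left : ∀ (a : A) (x y : M), inn (a • x) y = a * inn x y
  inn_smul_leftC : ∀ (c : ℂ) (x y : M), inn (c • x) y = c • inn x y
  inn_star : ∀ x y : M, star (inn x y) = inn y x
  inn_pos : ∀ x : M, ∃ b : A, inn x x = star b * b
  inn_definite : ∀ x : M, inn x x = 0 → x = 0
  norm_eq : ∀ x : M, ‖x‖ = Real.sqrt ‖inn x x‖
  Ddom_dense : Dense Ddom
  Ddom_add : ∀ x ∈ Ddom, ∀ y ∈ Ddom, x + y ∈ Ddom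
  Ddom_smul : ∀ (c : ℂ), ∀ x ∈ Ddom, c • x ∈ Ddom
  D_nonneg : ∀ x : M, 0 ≤ D x
  D_add : ∀ x ∈ Ddom, ∀ y ∈ Ddom, D (x + y) ≤ D x + D y
  D_smul : ∀ (c : ℂ), ∀ x ∈ Ddom, D (c • x) = ‖c‖ * D x
  norm_le_D : ∀ x ∈ Ddom, ‖x‖ ≤ D x
  D_ball_compact : IsCompact {x : M | x ∈ Ddom ∧ D x ≤ 1}
  D_leibniz : ∀ a ∈ base.dom, ∀ x ∈ Ddom,
      a • x ∈ Ddom ∧ D (a • x) ≤ G ‖a‖ (base.L a) (D x)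
  inn_leibniz : ∀ x ∈ Ddom, ∀ y ∈ Ddom,
      reEl (inn x y) ∈ base.dom ∧ imEl (inn x y) ∈ base.dom ∧
      base.L (reEl (inn x y)) ≤ H (D x) (D y) ∧
      base.L (imEl (inn x y)) ≤ H (D x) (D y)

attribute [instance] BundledMQVB.instRing BundledMQVB.instStarRing BundledMQVB.instCStar
  BundledMQVB.instAlg BundledMQVB.instStarMod BundledMQVB.instComplete
  BundledMQVB.instM BundledMQVB.instMC BundledMQVB.instMA BundledMQVB.instTower
  BundledMQVB.instMComplete

variable {F : ℝ → ℝ → ℝ → ℝ → ℝ} {G : ℝ → ℝ → ℝ → ℝ} {H : ℝ → ℝ → ℝ}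

/-- The closed ball of radius `r` for the D-norm of a metrized quantum vector bundle. -/
def BundledMQVB.Dball (Ω : BundledMQVB F G H) (r : ℝ) : Set Ω.M :=
  {ω | ω ∈ Ω.Ddom ∧ Ω.D ω ≤ r}

/-- The modular Monge-Kantorovich metric of a metrized quantum vector bundle. -/
def BundledMQVB.mkD (Ω : BundledMQVB F G H) (x y : Ω.M) : ℝ :=
  sSup {r | ∃ ξ ∈ Ω.Ddom, Ω.D ξ ≤ 1 ∧ r = ‖Ω.inn x ξ - Ω.inn y ξ‖}

/-- The `A`-weak topology on the module of a metrized quantum vector bundle. -/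
def BundledMQVB.aWeak (Ω : BundledMQVB F G H) : TopologicalSpace Ω.M :=
  TopologicalSpace.induced (fun (ω : Ω.M) (ξ : Ω.M) => Ω.inn ω ξ) Pi.topologicalSpace
/-! ### Modular bridges -/

/-- A modular bridge between two metrized quantum vector bundles. -/
structure ModularBridge (ΩA ΩB : BundledMQVB F G H) where
  Dalg : Type
  [instDRing : NormedRing Dalg]
  [instDStarRing : StarRing Dalg]
  [instDCStar : CStarRing Dalg]
  [instDAlg : NormedAlgebra ℂ Dalg]
  [instDStarMod : StarModule ℂ Dalg]
  [instDComplete : CompleteSpace Dalg]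
  J : Type
  [instJ : Nonempty J]
  pivot : Dalg
  piA : ΩA.A →⋆ₐ[ℂ] Dalg
  piB : ΩB.A →⋆ₐ[ℂ] Dalg
  piA_inj : Function.Injective piA
  piB_inj : Function.Injective piB
  pivot_norm : ‖pivot‖ = 1
  levelSet_nonempty : pivotLevelNonempty pivot
  anchors : J → ΩA.M
  coanchors : J → ΩB.M
  anchors_mem : ∀ j, anchors j ∈ ΩA.Ddom
  anchors_le : ∀ j, ΩA.D (anchors j) ≤ 1
  coanchors_mem : ∀ j, coanchors j ∈ ΩB.Ddom
  coanchors_le : ∀ j, ΩB.D (coanchors j) ≤ 1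

attribute [instance] ModularBridge.instDRing ModularBridge.instDStarRing
  ModularBridge.instDCStar ModularBridge.instDAlg ModularBridge.instDStarMod
  ModularBridge.instDComplete ModularBridge.instJ

namespace ModularBridge

variable {ΩA ΩB : BundledMQVB F G H}

/-- The bridge seminorm of a modular bridge. -/
def bn (γ : ModularBridge ΩA ΩB) (a : ΩA.A) (b : ΩB.A) : ℝ :=
  ‖γ.piA a * γ.pivot - γ.pivot * γ.piB b‖

/-- The deck seminorm of a modular bridge. -/
def dn (γ : ModularBridge ΩA ΩB) (ω : ΩA.M) (η : ΩB.M) : ℝ :=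
  ⨆ k : γ.J,
    max (γ.bn (ΩA.inn ω (γ.anchors k)) (ΩB.inn η (γ.coanchors k)))
        (γ.bn (ΩA.inn (γ.anchors k) ω) (ΩB.inn (γ.coanchors k) η))

/-- The basic reach of a modular bridge. -/
def basicReach (γ : ModularBridge ΩA ΩB) : ℝ :=
  max
    (sSup {r | ∃ a ∈ ΩA.base.dom, ΩA.base.L a ≤ 1 ∧
        r = sInf {s | ∃ b ∈ ΩB.base.dom, ΩB.base.L b ≤ 1 ∧ s = γ.bn a b}})
    (sSup {r | ∃ b ∈ ΩB.base.dom, ΩB.base.L b ≤ 1 ∧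
        r = sInf {s | ∃ a ∈ ΩA.base.dom, ΩA.base.L a ≤ 1 ∧ s = γ.bn a b}})

/-- The modular reach of a modular bridge. -/
def modularReach (γ : ModularBridge ΩA ΩB) : ℝ :=
  ⨆ j : γ.J, γ.dn (γ.anchors j) (γ.coanchors j)

/-- The imprint of a modular bridge. -/
def imprint (γ : ModularBridge ΩA ΩB) : ℝ :=
  max (hausDist ΩA.mkD (Set.range γ.anchors) (ΩA.Dball 1))
      (hausDist ΩB.mkD (Set.range γ.coanchors) (ΩB.Dball 1))

/-- The reach of a modular bridge. -/
def reach (γ : ModularBridge ΩA ΩB) : ℝ :=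
  max γ.basicReach (γ.modularReach + γ.imprint)

/-- The states of the bridge algebra in the 1-level set of the pivot. -/
def levelStates (γ : ModularBridge ΩA ΩB) : Set (CState γ.Dalg) :=
  {φ | φ.toFun (star (1 - γ.pivot) * (1 - γ.pivot)) = 0 ∧
       φ.toFun ((1 - γ.pivot) * star (1 - γ.pivot)) = 0}

/-- The height of a modular bridge. -/
def height (γ : ModularBridge ΩA ΩB) : ℝ :=
  max
    (hausDist (mkDist ΩA.base.dom ΩA.base.L) (Set.univ : Set (CState ΩA.A))
      {ψ | ∃ φ ∈ γ.levelStates, ∀ a : ΩA.A, ψ.toFun a = φ.toFun (γ.piA a)})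
    (hausDist (mkDist ΩB.base.dom ΩB.base.L) (Set.univ : Set (CState ΩB.A))
      {ψ | ∃ φ ∈ γ.levelStates, ∀ b : ΩB.A, ψ.toFun b = φ.toFun (γ.piB b)})

/-- The length of a modular bridge. -/
def length (γ : ModularBridge ΩA ΩB) : ℝ := max γ.reach γ.height

/-- The `l`-modular target set of `ω` for a modular bridge. -/
def mtarget (γ : ModularBridge ΩA ΩB) (ω : ΩA.M) (l : ℝ) : Set ΩB.M :=
  {η | η ∈ ΩB.Ddom ∧ ΩB.D η ≤ l ∧ γ.dn ω η ≤ l * γ.reach}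

/-- The `l`-target set of `a` for a modular bridge. -/
def atarget (γ : ModularBridge ΩA ΩB) (a : ΩA.A) (l : ℝ) : Set ΩB.A :=
  {b | b ∈ ΩB.base.dom ∧ ΩB.base.L b ≤ l ∧ γ.bn a b ≤ l * γ.basicReach}

/-- The reverse of a modular bridge. -/
def reverse (γ : ModularBridge ΩA ΩB) : ModularBridge ΩB ΩA where
  Dalg := γ.Dalg
  J := γ.J
  pivot := star γ.pivot
  piA := γ.piB
  piB := γ.piA
  piA_inj := γ.piB_inj
  piB_inj := γ.piA_inj
  pivot_norm := by rw [norm_star]; exact γ.pivot_norm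
  levelSet_nonempty := by
    obtain ⟨φ, h1, h2⟩ := γ.levelSet_nonempty
    refine ⟨φ, ?_, ?_⟩
    · have e1 : star ((1 : γ.Dalg) - star γ.pivot) = 1 - γ.pivot := by
        simp [star_sub]
      have e2 : (1 : γ.Dalg) - star γ.pivot = star (1 - γ.pivot) := by
        simp [star_sub]
      rw [e1, e2]; exact h2
    · have e1 : star ((1 : γ.Dalg) - star γ.pivot) = 1 - γ.pivot := by
        simp [star_sub]
      have e2 : (1 : γ.Dalg) - star γ.pivot = star (1 - γ.pivot) := by
        simp [star_sub]
      rw [e1, e2]; exact h1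
  anchors := γ.coanchors
  coanchors := γ.anchors
  anchors_mem := γ.coanchors_mem
  anchors_le := γ.coanchors_le
  coanchors_mem := γ.anchors_mem
  coanchors_le := γ.anchors_le

end ModularBridge

/-! ### Modular treks -/

/-- A modular trek: a finite chain of composable modular bridges. -/
inductive Trek (F : ℝ → ℝ → ℝ → ℝ → ℝ) (G : ℝ → ℝ → ℝ → ℝ) (H : ℝ → ℝ → ℝ) :
    BundledMQVB F G H → BundledMQVB F G H → Type 1
  | single {ΩA ΩB : BundledMQVB F G H} (γ : ModularBridge ΩA ΩB) : Trek F G H ΩA ΩB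
  | cons {ΩA ΩB ΩC : BundledMQVB F G H} (γ : ModularBridge ΩA ΩB)
      (Γ : Trek F G H ΩB ΩC) : Trek F G H ΩA ΩC

namespace Trek

/-- The length of a modular trek: the sum of the lengths of its bridges. -/
def length : ∀ {ΩA ΩB : BundledMQVB F G H}, Trek F G H ΩA ΩB → ℝ
  | _, _, .single γ => γ.length
  | _, _, .cons γ Γ => γ.length + Trek.length Γ

/-- The modular target set of a modular trek (the set of endpoints of `l`-itineraries). -/
def mtarget : ∀ {ΩA ΩB : BundledMQVB F G H}, Trek F G H ΩA ΩB → ΩA.M → ℝ → Set ΩB.M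
  | _, _, .single γ, ω, l => γ.mtarget ω l
  | _, _, .cons γ Γ, ω, l => {η | ∃ ξ ∈ γ.mtarget ω l, η ∈ Trek.mtarget Γ ξ l}

/-- The target set of a modular trek on the base algebras. -/
def atarget : ∀ {ΩA ΩB : BundledMQVB F G H}, Trek F G H ΩA ΩB → ΩA.A → ℝ → Set ΩB.A
  | _, _, .single γ, a, l => γ.atarget a l
  | _, _, .cons γ Γ, a, l => {b | ∃ c ∈ γ.atarget a l, b ∈ Trek.atarget Γ c l}

end Trek


/-! ### Auxiliary results for statement 3 -/

instance (priority := 100) cstarOfParts (A : Type*) [NormedRing A] [StarRing A] [CStarRing A]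
    [NormedAlgebra ℂ A] [StarModule ℂ A] [CompleteSpace A] : CStarAlgebra A :=
  { ‹NormedRing A›, ‹StarRing A›, ‹CStarRing A›, ‹NormedAlgebra ℂ A›, ‹StarModule ℂ A›,
    ‹CompleteSpace A› with }

/-- Cauchy-Schwarz type bound: the inner product of two elements of the closed unit ball
of the C*-Hilbert norm has norm at most one. -/
lemma BundledMQVB.norm_inn_le_one (Ω : BundledMQVB F G H) {x y : Ω.M}
    (hx : ‖x‖ ≤ 1) (hy : ‖y‖ ≤ 1) : ‖Ω.inn x y‖ ≤ 1 := by
  set a := Ω.inn x y with ha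
  have hsub : ∀ u v w : Ω.M, Ω.inn (u - v) w = Ω.inn u w - Ω.inn v w := by
    intro u v w
    have h : u - v = u + ((-1 : ℂ) • v) := by rw [neg_one_smul]; exact sub_eq_add_neg u v
    rw [h, Ω.inn_add_left, Ω.inn_smul_leftC]
    simp [sub_eq_add_neg]
  have hsub' : ∀ u v w : Ω.M, Ω.inn w (u - v) = Ω.inn w u - Ω.inn w v := by
    intro u v w
    rw [← Ω.inn_star, hsub, star_sub, Ω.inn_star, Ω.inn_star]
  have e0 : Ω.inn y x = star a := by rw [ha, Ω.inn_star]
  have e1 : Ω.inn (a • y) x = a * star a := by rw [Ω.inn_smul_left, e0]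
  have e2 : Ω.inn x (a • y) = a * star a := by
    rw [← Ω.inn_star, e1, star_mul, star_star]
  have eyy : star (Ω.inn y y) = Ω.inn y y := Ω.inn_star y y
  have e3 : Ω.inn (a • y) (a • y) = a * Ω.inn y y * star a := by
    have h4 : Ω.inn y (a • y) = Ω.inn y y * star a := by
      rw [← Ω.inn_star (a • y) y, Ω.inn_smul_left, star_mul, eyy]
    rw [Ω.inn_smul_left, h4, mul_assoc]
  have hzz : Ω.inn (x - a • y) (x - a • y)
      = (Ω.inn x x + a * Ω.inn y y * star a) - (a * star a + a * star a) := by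
    rw [hsub, hsub', hsub', e1, e2, e3]; abel
  obtain ⟨b, hb⟩ := Ω.inn_pos (x - a • y)
  letI : PartialOrder Ω.A := CStarAlgebra.spectralOrder Ω.A
  haveI : StarOrderedRing Ω.A := CStarAlgebra.spectralOrderedRing Ω.A
  have hle : a * star a + a * star a ≤ Ω.inn x x + a * Ω.inn y y * star a := by
    rw [← sub_nonneg, ← hzz, hb]
    exact star_mul_self_nonneg b
  have hpos : (0 : Ω.A) ≤ a * star a + a * star a :=
    add_nonneg (mul_star_self_nonneg a) (mul_star_self_nonneg a)
  have hn := CStarAlgebra.norm_le_norm_of_nonneg_of_le hpos hle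
  have hxx : ‖Ω.inn x x‖ ≤ 1 := by
    have h2 : ‖x‖ ^ 2 = ‖Ω.inn x x‖ := by
      rw [Ω.norm_eq x]; exact Real.sq_sqrt (norm_nonneg _)
    nlinarith [norm_nonneg x]
  have hyy : ‖Ω.inn y y‖ ≤ 1 := by
    have h2 : ‖y‖ ^ 2 = ‖Ω.inn y y‖ := by
      rw [Ω.norm_eq y]; exact Real.sq_sqrt (norm_nonneg _)
    nlinarith [norm_nonneg y]
  have hL : ‖a * star a + a * star a‖ = 2 * (‖a‖ * ‖a‖) := by
    rw [← two_smul ℝ (a * star a), norm_smul, CStarRing.norm_self_mul_star]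
    norm_num
  have h1 : ‖a * Ω.inn y y * star a‖ ≤ ‖a‖ * ‖a‖ := by
    have t1 := norm_mul_le (a * Ω.inn y y) (star a)
    have t2 := norm_mul_le a (Ω.inn y y)
    have t3 : ‖star a‖ = ‖a‖ := norm_star a
    nlinarith [norm_nonneg a, norm_nonneg (Ω.inn y y), norm_nonneg (a * Ω.inn y y)]
  have hR : ‖Ω.inn x x + a * Ω.inn y y * star a‖ ≤ 1 + ‖a‖ * ‖a‖ :=
    (norm_add_le _ _).trans (by linarith)
  have hfin : 2 * (‖a‖ * ‖a‖) ≤ 1 + ‖a‖ * ‖a‖ := by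
    rw [← hL]; exact hn.trans hR
  nlinarith [norm_nonneg a]

/-- The bridge seminorm is bounded by 2 on pairs of elements of the unit balls. -/
lemma ModularBridge.bn_le_two {ΩA ΩB : BundledMQVB F G H} (γ : ModularBridge ΩA ΩB)
    {a : ΩA.A} {b : ΩB.A} (ha : ‖a‖ ≤ 1) (hb : ‖b‖ ≤ 1) : γ.bn a b ≤ 2 := by
  have h1 : ‖γ.piA a * γ.pivot‖ ≤ 1 := by
    calc ‖γ.piA a * γ.pivot‖ ≤ ‖γ.piA a‖ * ‖γ.pivot‖ := norm_mul_le _ _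
      _ ≤ 1 := by
          rw [γ.pivot_norm, mul_one]
          exact (NonUnitalStarAlgHom.norm_apply_le γ.piA a).trans ha
  have h2 : ‖γ.pivot * γ.piB b‖ ≤ 1 := by
    calc ‖γ.pivot * γ.piB b‖ ≤ ‖γ.pivot‖ * ‖γ.piB b‖ := norm_mul_le _ _
      _ ≤ 1 := by
          rw [γ.pivot_norm, one_mul]
          exact (NonUnitalStarAlgHom.norm_apply_le γ.piB b).trans hb
  calc γ.bn a b ≤ ‖γ.piA a * γ.pivot‖ + ‖γ.pivot * γ.piB b‖ := norm_sub_le _ _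
    _ ≤ 2 := by linarith

/-- every modular bridge has finite length; more precisely, the deck seminorm
is at most `2` on pairs of elements of the closed unit balls of the D-norms, so that the
modular reach is at most `2` (in particular the supremum defining it is bounded). -/
theorem statement3 {F : ℝ → ℝ → ℝ → ℝ → ℝ} {G : ℝ → ℝ → ℝ → ℝ} {H : ℝ → ℝ → ℝ}
    (hFGH : AdmissibleTriple F G H)
    {ΩA ΩB : BundledMQVB F G H} (γ : ModularBridge ΩA ΩB) :
    (∀ ω ∈ ΩA.Ddom, ΩA.D ω ≤ 1 → ∀ η ∈ ΩB.Ddom, ΩB.D η ≤ 1 → γ.dn ω η ≤ 2) ∧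
    BddAbove (Set.range fun j : γ.J => γ.dn (γ.anchors j) (γ.coanchors j)) ∧
    γ.modularReach ≤ 2 := by
  have key : ∀ ω ∈ ΩA.Ddom, ΩA.D ω ≤ 1 → ∀ η ∈ ΩB.Ddom, ΩB.D η ≤ 1 → γ.dn ω η ≤ 2 := by
    intro ω hω hDω η hη hDη
    have hωn : ‖ω‖ ≤ 1 := (ΩA.norm_le_D ω hω).trans hDω
    have hηn : ‖η‖ ≤ 1 := (ΩB.norm_le_D η hη).trans hDη
    unfold ModularBridge.dn
    refine Real.iSup_le (fun k => ?_) (by norm_num)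
    have hak : ‖γ.anchors k‖ ≤ 1 :=
      (ΩA.norm_le_D _ (γ.anchors_mem k)).trans (γ.anchors_le k)
    have hck : ‖γ.coanchors k‖ ≤ 1 :=
      (ΩB.norm_le_D _ (γ.coanchors_mem k)).trans (γ.coanchors_le k)
    exact max_le (γ.bn_le_two (ΩA.norm_inn_le_one hωn hak) (ΩB.norm_inn_le_one hηn hck))
      (γ.bn_le_two (ΩA.norm_inn_le_one hak hωn) (ΩB.norm_inn_le_one hck hηn))
  have key2 : ∀ j : γ.J, γ.dn (γ.anchors j) (γ.coanchors j) ≤ 2 := fun j =>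
    key _ (γ.anchors_mem j) (γ.anchors_le j) _ (γ.coanchors_mem j) (γ.coanchors_le j)
  refine ⟨key, ⟨2, ?_⟩, ?_⟩
  · rintro r ⟨j, rfl⟩
    exact key2 j
  · unfold ModularBridge.modularReach
    exact Real.iSup_le key2 (by norm_num)
end
end

section
/- Let γ be a modular bridge from Ω_A to Ω_B. If ω ∈ M with D_M(ω) ≤ 1 and j ∈ J is chosen so that mkD_{Ω_A}(ω, ω_j) ≤ ι(γ), then dn_γ(ω, η_j) ≤ ρ(γ); the same holds with the roles of Ω_A and Ω_B exchanged. Consequently, the maximum of the following four quantities is at most ρ(γ): sup over a ∈ sa(A) with L_A(a) ≤ 1 of inf over b ∈ sa(B) with L_B(b) ≤ 1 of bn_γ(a,b); the symmetric quantity exchanging A and B; sup over ω ∈ M with D_M(ω) ≤ 1 of inf over η ∈ N with D_N(η) ≤ 1 of dn_γ(ω,η); and the symmetric quantity exchanging M and N. -/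
open scoped ComplexOrder

noncomputable section

variable {F : ℝ → ℝ → ℝ → ℝ → ℝ} {G : ℝ → ℝ → ℝ → ℝ} {H : ℝ → ℝ → ℝ}

namespace BundledMQVB

variable {F : ℝ → ℝ → ℝ → ℝ → ℝ} {G : ℝ → ℝ → ℝ → ℝ} {H : ℝ → ℝ → ℝ}
variable (Ω : BundledMQVB F G H)

def cstarOf (A : Type*) [NormedRing A] [StarRing A] [CStarRing A] [NormedAlgebra ℂ A]
    [StarModule ℂ A] [CompleteSpace A] : CStarAlgebra A := { }

lemma inn_add_right (x y z : Ω.M) : Ω.inn x (y + z) = Ω.inn x y + Ω.inn x z := by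
  rw [← Ω.inn_star, Ω.inn_add_left, star_add, Ω.inn_star, Ω.inn_star]

lemma inn_smul_rightC (c : ℂ) (x y : Ω.M) :
    Ω.inn x (c • y) = (starRingEnd ℂ c) • Ω.inn x y := by
  rw [← Ω.inn_star, Ω.inn_smul_leftC, star_smul, Ω.inn_star]
  rfl

lemma inn_sub_left (x y z : Ω.M) : Ω.inn (x - y) z = Ω.inn x z - Ω.inn y z := by
  have : x - y = x + (-1 : ℂ) • y := by module
  rw [this, Ω.inn_add_left, Ω.inn_smul_leftC]; module

lemma inn_sub_right (x y z : Ω.M) : Ω.inn x (y - z) = Ω.inn x y - Ω.inn x z := by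
  rw [← Ω.inn_star, inn_sub_left, star_sub, Ω.inn_star, Ω.inn_star]

lemma norm_inn_self (x : Ω.M) : ‖Ω.inn x x‖ = ‖x‖ ^ 2 := by
  have h := Ω.norm_eq x
  have h0 : (0:ℝ) ≤ ‖Ω.inn x x‖ := norm_nonneg _
  rw [h, Real.sq_sqrt h0]

lemma polarization (x y : Ω.M) :
    (4 : ℂ) • Ω.inn x y =
      (Ω.inn (x + y) (x + y) - Ω.inn (x - y) (x - y))
        + Complex.I • Ω.inn (x + Complex.I • y) (x + Complex.I • y)
        - Complex.I • Ω.inn (x - Complex.I • y) (x - Complex.I • y) := by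
  simp only [Ω.inn_add_left, inn_add_right, inn_sub_left, inn_sub_right,
    Ω.inn_smul_leftC, inn_smul_rightC, Complex.conj_I, smul_sub, smul_add, smul_smul]
  match_scalars <;> simp [Complex.I_sq] <;> ring

lemma norm_smulM (c : ℂ) (m : Ω.M) : ‖c • m‖ = ‖c‖ * ‖m‖ := by
  have h : Ω.inn (c • m) (c • m) = (c * starRingEnd ℂ c) • Ω.inn m m := by
    rw [Ω.inn_smul_leftC, inn_smul_rightC, smul_smul]
  have hc : c * starRingEnd ℂ c = ((‖c‖ ^ 2 : ℝ) : ℂ) := by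
    rw [Complex.mul_conj']
    norm_cast
  rw [Ω.norm_eq, h, hc, norm_smul, Ω.norm_eq m, Complex.norm_real, Real.norm_eq_abs,
    abs_of_nonneg (by positivity), Real.sqrt_mul (by positivity), Real.sqrt_sq (norm_nonneg c)]

lemma norm_inn_le (x y : Ω.M) : ‖Ω.inn x y‖ ≤ (‖x‖ + ‖y‖) ^ 2 := by
  have hp := Ω.polarization x y
  have h4 : ‖(4 : ℂ) • Ω.inn x y‖ = 4 * ‖Ω.inn x y‖ := by
    rw [norm_smul]; norm_num
  have hb : ∀ z : Ω.M, ‖z‖ ≤ ‖x‖ + ‖y‖ → ‖Ω.inn z z‖ ≤ (‖x‖ + ‖y‖) ^ 2 := by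
    intro z hz
    rw [Ω.norm_inn_self]
    exact pow_le_pow_left₀ (norm_nonneg _) hz 2
  have hIy : ‖Complex.I • y‖ = ‖y‖ := by rw [Ω.norm_smulM]; simp
  have e1 : ‖Ω.inn (x+y) (x+y)‖ ≤ (‖x‖+‖y‖)^2 := hb _ (norm_add_le _ _)
  have e2 : ‖Ω.inn (x-y) (x-y)‖ ≤ (‖x‖+‖y‖)^2 := hb _ (norm_sub_le _ _)
  have e3 : ‖Ω.inn (x+Complex.I • y) (x+Complex.I • y)‖ ≤ (‖x‖+‖y‖)^2 :=
    hb _ (by calc ‖x + Complex.I • y‖ ≤ ‖x‖ + ‖Complex.I • y‖ := norm_add_le _ _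
               _ = ‖x‖ + ‖y‖ := by rw [hIy])
  have e4 : ‖Ω.inn (x-Complex.I • y) (x-Complex.I • y)‖ ≤ (‖x‖+‖y‖)^2 :=
    hb _ (by calc ‖x - Complex.I • y‖ ≤ ‖x‖ + ‖Complex.I • y‖ := norm_sub_le _ _
               _ = ‖x‖ + ‖y‖ := by rw [hIy])
  have : 4 * ‖Ω.inn x y‖ ≤ 4 * (‖x‖+‖y‖)^2 := by
    rw [← h4, hp]
    calc ‖_‖ ≤ ‖(Ω.inn (x + y) (x + y) - Ω.inn (x - y) (x - y))
        + Complex.I • Ω.inn (x + Complex.I • y) (x + Complex.I • y)‖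
        + ‖Complex.I • Ω.inn (x - Complex.I • y) (x - Complex.I • y)‖ := norm_sub_le _ _
      _ ≤ (‖Ω.inn (x + y) (x + y) - Ω.inn (x - y) (x - y)‖
        + ‖Complex.I • Ω.inn (x + Complex.I • y) (x + Complex.I • y)‖)
        + ‖Complex.I • Ω.inn (x - Complex.I • y) (x - Complex.I • y)‖ := by
          gcongr; exact norm_add_le _ _
      _ ≤ ((‖Ω.inn (x + y) (x + y)‖ + ‖Ω.inn (x - y) (x - y)‖)
        + ‖Ω.inn (x + Complex.I • y) (x + Complex.I • y)‖)
        + ‖Ω.inn (x - Complex.I • y) (x - Complex.I • y)‖ := by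
          rw [norm_smul, norm_smul]; simp only [Complex.norm_I, one_mul]
          gcongr; exact norm_sub_le _ _
      _ ≤ (((‖x‖+‖y‖)^2 + (‖x‖+‖y‖)^2) + (‖x‖+‖y‖)^2) + (‖x‖+‖y‖)^2 := by gcongr
      _ = 4 * (‖x‖+‖y‖)^2 := by ring
  linarith

end BundledMQVB
instance (priority := 10) instCStarOfBundled {F : ℝ → ℝ → ℝ → ℝ → ℝ} {G : ℝ → ℝ → ℝ → ℝ}
    {H : ℝ → ℝ → ℝ} (Ω : BundledMQVB F G H) : CStarAlgebra Ω.A := { }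

instance (priority := 10) instCStarOfBridge {F : ℝ → ℝ → ℝ → ℝ → ℝ} {G : ℝ → ℝ → ℝ → ℝ}
    {H : ℝ → ℝ → ℝ} {ΩA ΩB : BundledMQVB F G H} (γ : ModularBridge ΩA ΩB) :
    CStarAlgebra γ.Dalg := { }

namespace BundledMQVB

variable {F : ℝ → ℝ → ℝ → ℝ → ℝ} {G : ℝ → ℝ → ℝ → ℝ} {H : ℝ → ℝ → ℝ}
variable (Ω : BundledMQVB F G H)

lemma norm_le_one_of_ball {x : Ω.M} (hx : x ∈ Ω.Dball 1) : ‖x‖ ≤ 1 :=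
  (Ω.norm_le_D x hx.1).trans hx.2

lemma norm_inn_le_four {x y : Ω.M} (hx : ‖x‖ ≤ 1) (hy : ‖y‖ ≤ 1) : ‖Ω.inn x y‖ ≤ 4 := by
  refine (Ω.norm_inn_le x y).trans ?_
  nlinarith [norm_nonneg x, norm_nonneg y]

lemma mkD_nonneg (x y : Ω.M) : 0 ≤ Ω.mkD x y :=
  Real.sSup_nonneg (by rintro r ⟨ξ, _, _, rfl⟩; exact norm_nonneg _)

lemma mkD_symm (x y : Ω.M) : Ω.mkD x y = Ω.mkD y x := by
  unfold BundledMQVB.mkD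
  congr 1
  ext r
  constructor <;> rintro ⟨ξ, h1, h2, rfl⟩ <;> exact ⟨ξ, h1, h2, (norm_sub_rev _ _)⟩

lemma le_mkD {x y : Ω.M} (hx : ‖x‖ ≤ 1) (hy : ‖y‖ ≤ 1) {ξ : Ω.M}
    (hξ : ξ ∈ Ω.Ddom) (hξD : Ω.D ξ ≤ 1) :
    ‖Ω.inn x ξ - Ω.inn y ξ‖ ≤ Ω.mkD x y := by
  apply le_csSup
  · refine ⟨8, ?_⟩
    rintro r ⟨ζ, hζ, hζD, rfl⟩
    have hζn : ‖ζ‖ ≤ 1 := (Ω.norm_le_D ζ hζ).trans hζD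
    calc ‖Ω.inn x ζ - Ω.inn y ζ‖ ≤ ‖Ω.inn x ζ‖ + ‖Ω.inn y ζ‖ := norm_sub_le _ _
      _ ≤ 4 + 4 := add_le_add (Ω.norm_inn_le_four hx hζn) (Ω.norm_inn_le_four hy hζn)
      _ = 8 := by norm_num
  · exact ⟨ξ, hξ, hξD, rfl⟩

lemma mkD_le_eight {x y : Ω.M} (hx : ‖x‖ ≤ 1) (hy : ‖y‖ ≤ 1) : Ω.mkD x y ≤ 8 := by
  apply Real.sSup_le _ (by norm_num)
  rintro r ⟨ζ, hζ, hζD, rfl⟩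
  have hζn : ‖ζ‖ ≤ 1 := (Ω.norm_le_D ζ hζ).trans hζD
  calc ‖Ω.inn x ζ - Ω.inn y ζ‖ ≤ ‖Ω.inn x ζ‖ + ‖Ω.inn y ζ‖ := norm_sub_le _ _
    _ ≤ 4 + 4 := add_le_add (Ω.norm_inn_le_four hx hζn) (Ω.norm_inn_le_four hy hζn)
    _ = 8 := by norm_num

end BundledMQVB

namespace ModularBridge

variable {F : ℝ → ℝ → ℝ → ℝ → ℝ} {G : ℝ → ℝ → ℝ → ℝ} {H : ℝ → ℝ → ℝ}
variable {ΩA ΩB : BundledMQVB F G H} (γ : ModularBridge ΩA ΩB)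

lemma bn_le (a : ΩA.A) (b : ΩB.A) : γ.bn a b ≤ ‖a‖ + ‖b‖ := by
  refine (norm_sub_le _ _).trans ?_
  have h1 : ‖γ.piA a * γ.pivot‖ ≤ ‖a‖ := by
    calc ‖γ.piA a * γ.pivot‖ ≤ ‖γ.piA a‖ * ‖γ.pivot‖ := norm_mul_le _ _
      _ = ‖γ.piA a‖ := by rw [γ.pivot_norm, mul_one]
      _ ≤ ‖a‖ := NonUnitalStarAlgHom.norm_apply_le _ a
  have h2 : ‖γ.pivot * γ.piB b‖ ≤ ‖b‖ := by
    calc ‖γ.pivot * γ.piB b‖ ≤ ‖γ.pivot‖ * ‖γ.piB b‖ := norm_mul_le _ _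
      _ = ‖γ.piB b‖ := by rw [γ.pivot_norm, one_mul]
      _ ≤ ‖b‖ := NonUnitalStarAlgHom.norm_apply_le _ b
  exact add_le_add h1 h2

lemma bn_nonneg (a : ΩA.A) (b : ΩB.A) : 0 ≤ γ.bn a b := norm_nonneg _

lemma bn_left_lip (a a' : ΩA.A) (b : ΩB.A) : γ.bn a b ≤ γ.bn a' b + ‖a - a'‖ := by
  have key : γ.piA a * γ.pivot - γ.pivot * γ.piB b =
      (γ.piA a' * γ.pivot - γ.pivot * γ.piB b) + γ.piA (a - a') * γ.pivot := by
    rw [map_sub, sub_mul]; abel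
  rw [bn, key]
  refine (norm_add_le _ _).trans (add_le_add le_rfl ?_)
  calc ‖γ.piA (a - a') * γ.pivot‖ ≤ ‖γ.piA (a - a')‖ * ‖γ.pivot‖ := norm_mul_le _ _
    _ = ‖γ.piA (a - a')‖ := by rw [γ.pivot_norm, mul_one]
    _ ≤ ‖a - a'‖ := NonUnitalStarAlgHom.norm_apply_le _ _

lemma bn_right_lip (a : ΩA.A) (b b' : ΩB.A) : γ.bn a b ≤ γ.bn a b' + ‖b - b'‖ := by
  have key : γ.piA a * γ.pivot - γ.pivot * γ.piB b =
      (γ.piA a * γ.pivot - γ.pivot * γ.piB b') - γ.pivot * γ.piB (b - b') := by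
    rw [map_sub, mul_sub]; abel
  rw [bn, key]
  refine (norm_sub_le _ _).trans (add_le_add le_rfl ?_)
  calc ‖γ.pivot * γ.piB (b - b')‖ ≤ ‖γ.pivot‖ * ‖γ.piB (b - b')‖ := norm_mul_le _ _
    _ = ‖γ.piB (b - b')‖ := by rw [γ.pivot_norm, one_mul]
    _ ≤ ‖b - b'‖ := NonUnitalStarAlgHom.norm_apply_le _ _

lemma dn_term_le_eight {ω : ΩA.M} {η : ΩB.M} (hω : ‖ω‖ ≤ 1) (hη : ‖η‖ ≤ 1) (k : γ.J) :
    max (γ.bn (ΩA.inn ω (γ.anchors k)) (ΩB.inn η (γ.coanchors k)))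
        (γ.bn (ΩA.inn (γ.anchors k) ω) (ΩB.inn (γ.coanchors k) η)) ≤ 8 := by
  have hak : ‖γ.anchors k‖ ≤ 1 := (ΩA.norm_le_D _ (γ.anchors_mem k)).trans (γ.anchors_le k)
  have hck : ‖γ.coanchors k‖ ≤ 1 := (ΩB.norm_le_D _ (γ.coanchors_mem k)).trans (γ.coanchors_le k)
  refine max_le ?_ ?_
  · calc γ.bn _ _ ≤ ‖ΩA.inn ω (γ.anchors k)‖ + ‖ΩB.inn η (γ.coanchors k)‖ := γ.bn_le _ _
      _ ≤ 4 + 4 := add_le_add (ΩA.norm_inn_le_four hω hak) (ΩB.norm_inn_le_four hη hck)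
      _ = 8 := by norm_num
  · calc γ.bn _ _ ≤ ‖ΩA.inn (γ.anchors k) ω‖ + ‖ΩB.inn (γ.coanchors k) η‖ := γ.bn_le _ _
      _ ≤ 4 + 4 := add_le_add (ΩA.norm_inn_le_four hak hω) (ΩB.norm_inn_le_four hck hη)
      _ = 8 := by norm_num

lemma le_dn {ω : ΩA.M} {η : ΩB.M} (hω : ‖ω‖ ≤ 1) (hη : ‖η‖ ≤ 1) (k : γ.J) :
    max (γ.bn (ΩA.inn ω (γ.anchors k)) (ΩB.inn η (γ.coanchors k)))
        (γ.bn (ΩA.inn (γ.anchors k) ω) (ΩB.inn (γ.coanchors k) η)) ≤ γ.dn ω η := by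
  have hb : BddAbove (Set.range fun k : γ.J =>
      max (γ.bn (ΩA.inn ω (γ.anchors k)) (ΩB.inn η (γ.coanchors k)))
          (γ.bn (ΩA.inn (γ.anchors k) ω) (ΩB.inn (γ.coanchors k) η))) :=
    ⟨8, by rintro r ⟨i, rfl⟩; exact γ.dn_term_le_eight hω hη i⟩
  exact le_ciSup hb k

lemma dn_le_eight {ω : ΩA.M} {η : ΩB.M} (hω : ‖ω‖ ≤ 1) (hη : ‖η‖ ≤ 1) :
    γ.dn ω η ≤ 8 :=
  ciSup_le fun k => γ.dn_term_le_eight hω hη k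

lemma dn_nonneg (ω : ΩA.M) (η : ΩB.M) : 0 ≤ γ.dn ω η :=
  Real.iSup_nonneg fun k => le_trans (γ.bn_nonneg _ _) (le_max_left _ _)

lemma dn_anchor_le_modularReach (j : γ.J) :
    γ.dn (γ.anchors j) (γ.coanchors j) ≤ γ.modularReach := by
  apply le_ciSup (f := fun j => γ.dn (γ.anchors j) (γ.coanchors j))
  refine ⟨8, ?_⟩
  rintro r ⟨i, rfl⟩
  exact γ.dn_le_eight ((ΩA.norm_le_D _ (γ.anchors_mem i)).trans (γ.anchors_le i))
    ((ΩB.norm_le_D _ (γ.coanchors_mem i)).trans (γ.coanchors_le i))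

lemma modularReach_nonneg : 0 ≤ γ.modularReach :=
  Real.iSup_nonneg fun j => γ.dn_nonneg _ _

lemma imprint_nonneg : 0 ≤ γ.imprint := by
  refine le_trans ?_ (le_max_left _ _)
  refine le_trans ?_ (le_max_left _ _)
  apply Real.sSup_nonneg
  rintro r ⟨x, _, rfl⟩
  exact Real.sInf_nonneg (by rintro s ⟨y, _, rfl⟩; exact ΩA.mkD_nonneg _ _)

lemma reach_nonneg : 0 ≤ γ.reach :=
  le_trans (add_nonneg γ.modularReach_nonneg γ.imprint_nonneg) (le_max_right _ _)

/-- Key estimate, A side. -/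
lemma key1 {ω : ΩA.M} (hm : ω ∈ ΩA.Ddom) (hD : ΩA.D ω ≤ 1) (j : γ.J) :
    γ.dn ω (γ.coanchors j) ≤ γ.modularReach + ΩA.mkD ω (γ.anchors j) := by
  have hnω : ‖ω‖ ≤ 1 := (ΩA.norm_le_D ω hm).trans hD
  have hnj : ‖γ.anchors j‖ ≤ 1 := (ΩA.norm_le_D _ (γ.anchors_mem j)).trans (γ.anchors_le j)
  have hcj : ‖γ.coanchors j‖ ≤ 1 := (ΩB.norm_le_D _ (γ.coanchors_mem j)).trans (γ.coanchors_le j)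
  apply ciSup_le
  intro k
  have h1 : ‖ΩA.inn ω (γ.anchors k) - ΩA.inn (γ.anchors j) (γ.anchors k)‖
      ≤ ΩA.mkD ω (γ.anchors j) :=
    ΩA.le_mkD hnω hnj (γ.anchors_mem k) (γ.anchors_le k)
  have h2 : ‖ΩA.inn (γ.anchors k) ω - ΩA.inn (γ.anchors k) (γ.anchors j)‖
      ≤ ΩA.mkD ω (γ.anchors j) := by
    rw [← norm_star, star_sub, ΩA.inn_star, ΩA.inn_star]
    exact h1
  have hd := (γ.le_dn hnj hcj k).trans (γ.dn_anchor_le_modularReach j)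
  refine max_le ?_ ?_
  · calc γ.bn (ΩA.inn ω (γ.anchors k)) (ΩB.inn (γ.coanchors j) (γ.coanchors k))
        ≤ γ.bn (ΩA.inn (γ.anchors j) (γ.anchors k)) (ΩB.inn (γ.coanchors j) (γ.coanchors k))
          + ‖ΩA.inn ω (γ.anchors k) - ΩA.inn (γ.anchors j) (γ.anchors k)‖ :=
          γ.bn_left_lip _ _ _
      _ ≤ γ.modularReach + ΩA.mkD ω (γ.anchors j) :=
          add_le_add ((le_max_left _ _).trans hd) h1
  · calc γ.bn (ΩA.inn (γ.anchors k) ω) (ΩB.inn (γ.coanchors k) (γ.coanchors j))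
        ≤ γ.bn (ΩA.inn (γ.anchors k) (γ.anchors j)) (ΩB.inn (γ.coanchors k) (γ.coanchors j))
          + ‖ΩA.inn (γ.anchors k) ω - ΩA.inn (γ.anchors k) (γ.anchors j)‖ :=
          γ.bn_left_lip _ _ _
      _ ≤ γ.modularReach + ΩA.mkD ω (γ.anchors j) :=
          add_le_add ((le_max_right _ _).trans hd) h2

/-- Key estimate, B side. -/
lemma key2 {η : ΩB.M} (hm : η ∈ ΩB.Ddom) (hD : ΩB.D η ≤ 1) (j : γ.J) :
    γ.dn (γ.anchors j) η ≤ γ.modularReach + ΩB.mkD η (γ.coanchors j) := by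
  have hnη : ‖η‖ ≤ 1 := (ΩB.norm_le_D η hm).trans hD
  have hnj : ‖γ.anchors j‖ ≤ 1 := (ΩA.norm_le_D _ (γ.anchors_mem j)).trans (γ.anchors_le j)
  have hcj : ‖γ.coanchors j‖ ≤ 1 := (ΩB.norm_le_D _ (γ.coanchors_mem j)).trans (γ.coanchors_le j)
  apply ciSup_le
  intro k
  have h1 : ‖ΩB.inn η (γ.coanchors k) - ΩB.inn (γ.coanchors j) (γ.coanchors k)‖
      ≤ ΩB.mkD η (γ.coanchors j) :=
    ΩB.le_mkD hnη hcj (γ.coanchors_mem k) (γ.coanchors_le k)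
  have h2 : ‖ΩB.inn (γ.coanchors k) η - ΩB.inn (γ.coanchors k) (γ.coanchors j)‖
      ≤ ΩB.mkD η (γ.coanchors j) := by
    rw [← norm_star, star_sub, ΩB.inn_star, ΩB.inn_star]
    exact h1
  have hd := (γ.le_dn hnj hcj k).trans (γ.dn_anchor_le_modularReach j)
  refine max_le ?_ ?_
  · calc γ.bn (ΩA.inn (γ.anchors j) (γ.anchors k)) (ΩB.inn η (γ.coanchors k))
        ≤ γ.bn (ΩA.inn (γ.anchors j) (γ.anchors k)) (ΩB.inn (γ.coanchors j) (γ.coanchors k))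
          + ‖ΩB.inn η (γ.coanchors k) - ΩB.inn (γ.coanchors j) (γ.coanchors k)‖ := by
          have := γ.bn_right_lip (ΩA.inn (γ.anchors j) (γ.anchors k))
            (ΩB.inn η (γ.coanchors k)) (ΩB.inn (γ.coanchors j) (γ.coanchors k))
          exact this
      _ ≤ γ.modularReach + ΩB.mkD η (γ.coanchors j) :=
          add_le_add ((le_max_left _ _).trans hd) h1
  · calc γ.bn (ΩA.inn (γ.anchors k) (γ.anchors j)) (ΩB.inn (γ.coanchors k) η)
        ≤ γ.bn (ΩA.inn (γ.anchors k) (γ.anchors j)) (ΩB.inn (γ.coanchors k) (γ.coanchors j))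
          + ‖ΩB.inn (γ.coanchors k) η - ΩB.inn (γ.coanchors k) (γ.coanchors j)‖ :=
          γ.bn_right_lip _ _ _
      _ ≤ γ.modularReach + ΩB.mkD η (γ.coanchors j) :=
          add_le_add ((le_max_right _ _).trans hd) h2

end ModularBridge
namespace ModularBridge

variable {F : ℝ → ℝ → ℝ → ℝ → ℝ} {G : ℝ → ℝ → ℝ → ℝ} {H : ℝ → ℝ → ℝ}
variable {ΩA ΩB : BundledMQVB F G H} (γ : ModularBridge ΩA ΩB)

lemma exists_anchorA {ω : ΩA.M} (hm : ω ∈ ΩA.Ddom) (hD : ΩA.D ω ≤ 1) {ε : ℝ} (hε : 0 < ε) :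
    ∃ j : γ.J, ΩA.mkD ω (γ.anchors j) < γ.imprint + ε := by
  have hnω : ‖ω‖ ≤ 1 := (ΩA.norm_le_D ω hm).trans hD
  have j₀ : γ.J := Classical.arbitrary γ.J
  set S := {s | ∃ x ∈ Set.range γ.anchors, s = ΩA.mkD x ω} with hS
  have hSne : S.Nonempty := ⟨ΩA.mkD (γ.anchors j₀) ω, γ.anchors j₀, ⟨j₀, rfl⟩, rfl⟩
  have hc_le : sInf S ≤ γ.imprint := by
    have hmem : sInf S ∈ {r | ∃ y ∈ ΩA.Dball 1,
        r = sInf {s | ∃ x ∈ Set.range γ.anchors, s = ΩA.mkD x y}} := ⟨ω, ⟨hm, hD⟩, rfl⟩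
    have hbdd : BddAbove {r | ∃ y ∈ ΩA.Dball 1,
        r = sInf {s | ∃ x ∈ Set.range γ.anchors, s = ΩA.mkD x y}} := by
      refine ⟨8, ?_⟩
      rintro r ⟨y, hy, rfl⟩
      have hny : ‖y‖ ≤ 1 := ΩA.norm_le_one_of_ball hy
      have hnj : ‖γ.anchors j₀‖ ≤ 1 :=
        (ΩA.norm_le_D _ (γ.anchors_mem j₀)).trans (γ.anchors_le j₀)
      calc sInf {s | ∃ x ∈ Set.range γ.anchors, s = ΩA.mkD x y}
          ≤ ΩA.mkD (γ.anchors j₀) y := by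
            refine csInf_le ⟨0, ?_⟩ ⟨γ.anchors j₀, ⟨j₀, rfl⟩, rfl⟩
            rintro s ⟨x, _, rfl⟩; exact ΩA.mkD_nonneg _ _
        _ ≤ 8 := ΩA.mkD_le_eight hnj hny
    calc sInf S ≤ sSup {r | ∃ y ∈ ΩA.Dball 1,
          r = sInf {s | ∃ x ∈ Set.range γ.anchors, s = ΩA.mkD x y}} := le_csSup hbdd hmem
      _ ≤ hausDist ΩA.mkD (Set.range γ.anchors) (ΩA.Dball 1) := le_max_right _ _
      _ ≤ γ.imprint := le_max_left _ _
  have hlt : sInf S < γ.imprint + ε := lt_of_le_of_lt hc_le (by linarith)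
  obtain ⟨s, hsmem, hslt⟩ := exists_lt_of_csInf_lt hSne hlt
  obtain ⟨x, ⟨j, rfl⟩, rfl⟩ := hsmem
  exact ⟨j, by rwa [ΩA.mkD_symm]⟩

lemma exists_anchorB {η : ΩB.M} (hm : η ∈ ΩB.Ddom) (hD : ΩB.D η ≤ 1) {ε : ℝ} (hε : 0 < ε) :
    ∃ j : γ.J, ΩB.mkD η (γ.coanchors j) < γ.imprint + ε := by
  have hnη : ‖η‖ ≤ 1 := (ΩB.norm_le_D η hm).trans hD
  have j₀ : γ.J := Classical.arbitrary γ.J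
  set S := {s | ∃ x ∈ Set.range γ.coanchors, s = ΩB.mkD x η} with hS
  have hSne : S.Nonempty := ⟨ΩB.mkD (γ.coanchors j₀) η, γ.coanchors j₀, ⟨j₀, rfl⟩, rfl⟩
  have hc_le : sInf S ≤ γ.imprint := by
    have hmem : sInf S ∈ {r | ∃ y ∈ ΩB.Dball 1,
        r = sInf {s | ∃ x ∈ Set.range γ.coanchors, s = ΩB.mkD x y}} := ⟨η, ⟨hm, hD⟩, rfl⟩
    have hbdd : BddAbove {r | ∃ y ∈ ΩB.Dball 1,
        r = sInf {s | ∃ x ∈ Set.range γ.coanchors, s = ΩB.mkD x y}} := by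
      refine ⟨8, ?_⟩
      rintro r ⟨y, hy, rfl⟩
      have hny : ‖y‖ ≤ 1 := ΩB.norm_le_one_of_ball hy
      have hnj : ‖γ.coanchors j₀‖ ≤ 1 :=
        (ΩB.norm_le_D _ (γ.coanchors_mem j₀)).trans (γ.coanchors_le j₀)
      calc sInf {s | ∃ x ∈ Set.range γ.coanchors, s = ΩB.mkD x y}
          ≤ ΩB.mkD (γ.coanchors j₀) y := by
            refine csInf_le ⟨0, ?_⟩ ⟨γ.coanchors j₀, ⟨j₀, rfl⟩, rfl⟩
            rintro s ⟨x, _, rfl⟩; exact ΩB.mkD_nonneg _ _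
        _ ≤ 8 := ΩB.mkD_le_eight hnj hny
    calc sInf S ≤ sSup {r | ∃ y ∈ ΩB.Dball 1,
          r = sInf {s | ∃ x ∈ Set.range γ.coanchors, s = ΩB.mkD x y}} := le_csSup hbdd hmem
      _ ≤ hausDist ΩB.mkD (Set.range γ.coanchors) (ΩB.Dball 1) := le_max_right _ _
      _ ≤ γ.imprint := le_max_right _ _
  have hlt : sInf S < γ.imprint + ε := lt_of_le_of_lt hc_le (by linarith)
  obtain ⟨s, hsmem, hslt⟩ := exists_lt_of_csInf_lt hSne hlt
  obtain ⟨x, ⟨j, rfl⟩, rfl⟩ := hsmem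
  exact ⟨j, by rwa [ΩB.mkD_symm]⟩

end ModularBridge
/-- if `ω` is in the closed unit ball of `D_M` and `j ∈ J` is such that
`mkD(ω, ω_j) ≤ ι(γ)`, then `dn(ω, η_j) ≤ ρ(γ)`, and symmetrically; consequently the four
natural sup-inf quantities between the unit balls of the L-seminorms and of the D-norms are
all bounded by the reach `ρ(γ)`. -/
theorem statement5 {F : ℝ → ℝ → ℝ → ℝ → ℝ} {G : ℝ → ℝ → ℝ → ℝ} {H : ℝ → ℝ → ℝ}
    (hFGH : AdmissibleTriple F G H)
    {ΩA ΩB : BundledMQVB F G H} (γ : ModularBridge ΩA ΩB) :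
    (∀ ω ∈ ΩA.Ddom, ΩA.D ω ≤ 1 → ∀ j : γ.J,
        ΩA.mkD ω (γ.anchors j) ≤ γ.imprint → γ.dn ω (γ.coanchors j) ≤ γ.reach) ∧
    (∀ η ∈ ΩB.Ddom, ΩB.D η ≤ 1 → ∀ j : γ.J,
        ΩB.mkD η (γ.coanchors j) ≤ γ.imprint → γ.dn (γ.anchors j) η ≤ γ.reach) ∧
    max
      (max
        (sSup {r | ∃ a ∈ ΩA.base.dom, ΩA.base.L a ≤ 1 ∧
            r = sInf {s | ∃ b ∈ ΩB.base.dom, ΩB.base.L b ≤ 1 ∧ s = γ.bn a b}})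
        (sSup {r | ∃ b ∈ ΩB.base.dom, ΩB.base.L b ≤ 1 ∧
            r = sInf {s | ∃ a ∈ ΩA.base.dom, ΩA.base.L a ≤ 1 ∧ s = γ.bn a b}}))
      (max
        (sSup {r | ∃ ω ∈ ΩA.Ddom, ΩA.D ω ≤ 1 ∧
            r = sInf {s | ∃ η ∈ ΩB.Ddom, ΩB.D η ≤ 1 ∧ s = γ.dn ω η}})
        (sSup {r | ∃ η ∈ ΩB.Ddom, ΩB.D η ≤ 1 ∧
            r = sInf {s | ∃ ω ∈ ΩA.Ddom, ΩA.D ω ≤ 1 ∧ s = γ.dn ω η}}))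
      ≤ γ.reach := by
  have hmr : γ.modularReach + γ.imprint ≤ γ.reach := le_max_right _ _
  refine ⟨?_, ?_, ?_⟩
  · intro ω hm hD j hj
    have := γ.key1 hm hD j
    linarith
  · intro η hm hD j hj
    have := γ.key2 hm hD j
    linarith
  · refine max_le ?_ (max_le ?_ ?_)
    · exact le_trans (le_of_eq rfl) (le_max_left γ.basicReach (γ.modularReach + γ.imprint))
    · refine Real.sSup_le ?_ γ.reach_nonneg
      rintro r ⟨ω, hm, hD, rfl⟩
      refine le_of_forall_pos_le_add ?_
      intro ε hε
      obtain ⟨j, hj⟩ := γ.exists_anchorA hm hD hε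
      have h1 : sInf {s | ∃ η ∈ ΩB.Ddom, ΩB.D η ≤ 1 ∧ s = γ.dn ω η}
          ≤ γ.dn ω (γ.coanchors j) := by
        refine csInf_le ⟨0, ?_⟩ ⟨γ.coanchors j, γ.coanchors_mem j, γ.coanchors_le j, rfl⟩
        rintro s ⟨η, _, _, rfl⟩; exact γ.dn_nonneg _ _
      have h2 := γ.key1 hm hD j
      linarith
    · refine Real.sSup_le ?_ γ.reach_nonneg
      rintro r ⟨η, hm, hD, rfl⟩
      refine le_of_forall_pos_le_add ?_
      intro ε hε
      obtain ⟨j, hj⟩ := γ.exists_anchorB hm hD hε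
      have h1 : sInf {s | ∃ ω ∈ ΩA.Ddom, ΩA.D ω ≤ 1 ∧ s = γ.dn ω η}
          ≤ γ.dn (γ.anchors j) η := by
        refine csInf_le ⟨0, ?_⟩ ⟨γ.anchors j, γ.anchors_mem j, γ.anchors_le j, rfl⟩
        rintro s ⟨ω, _, _, rfl⟩; exact γ.dn_nonneg _ _
      have h2 := γ.key2 hm hD j
      linarith
end
end
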